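/- For each fixed m ≥ 2, the formal power series F_m(y) = Σ_{n≥0} Ω_n(m) yⁿ satisfies (2 − y² − y·F_{m−1}(y)) · F_m(y) = y + 2·F_{m−1}(y). -/

import Mathlib

/-- `f : [n] → {1,…,m}` is a zig-zag sequence: `f(1) ≤ f(2) ≥ f(3) ≤ f(4) ≥ ⋯`. -/
def IsZigZagSeq {n m : ℕ} (f : Fin n → Fin m) : Prop :=
  ∀ (i : ℕ) (h : i + 1 < n),
    (i % 2 = 0 → f ⟨i, Nat.lt_of_succ_lt h⟩ ≤ f ⟨i + 1, h⟩) ∧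
    (i % 2 = 1 → f ⟨i + 1, h⟩ ≤ f ⟨i, Nat.lt_of_succ_lt h⟩)

/-- The zig-zag order polynomial `Ω_n(m)`: the number of zig-zag sequences of length `n`
with entries in `{1,…,m}`. In particular `Ω_0(m) = 1` and `Ω_n(0) = 0` for `n ≥ 1`. -/
noncomputable def zzOmega (n m : ℕ) : ℕ :=
  Set.ncard {f : Fin n → Fin m | IsZigZagSeq f}

/-- The ordinary generating function `F_m(y) = Σ_{n≥0} Ω_n(m) yⁿ` in `ℚ[[y]]`. -/
noncomputable def zzF (m : ℕ) : PowerSeries ℚ :=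
  PowerSeries.mk fun n => (zzOmega n m : ℚ)

namespace ZZaux
open PowerSeries

set_option maxHeartbeats 1000000

lemma omega_eq (n m : ℕ) :
    zzOmega n m = Nat.card {f : Fin n → Fin m // IsZigZagSeq f} := by
  rw [zzOmega, ← Nat.card_coe_set_eq]
  rfl

lemma omega_zero (m : ℕ) : zzOmega 0 m = 1 := by
  rw [omega_eq]
  have h : ∀ f : Fin 0 → Fin m, IsZigZagSeq f := fun f i h => absurd h (by omega)
  rw [Nat.card_congr (Equiv.subtypeUnivEquiv h)]
  exact Nat.card_unique

lemma omega_of_zero (n : ℕ) (hn : n ≠ 0) : zzOmega n 0 = 0 := by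
  rw [omega_eq]
  have : IsEmpty (Fin n → Fin 0) := ⟨fun f => (f ⟨0, by omega⟩).elim0⟩
  exact Nat.card_of_isEmpty

/-- Dropping the top value when it is avoided. -/
def avoidEquiv (n m : ℕ) :
    {f : Fin n → Fin (m+1) // IsZigZagSeq f ∧ ∀ i, f i ≠ Fin.last m} ≃
    {g : Fin n → Fin m // IsZigZagSeq g} where
  toFun := fun ⟨f, hf, ha⟩ =>
    ⟨fun i => ⟨(f i : ℕ), lt_of_le_of_ne (Nat.lt_succ_iff.mp (f i).isLt)
        (fun h => ha i (Fin.ext h))⟩,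
      fun i h => (hf i h)⟩
  invFun := fun ⟨g, hg⟩ =>
    ⟨fun i => (g i).castSucc, fun i h => hg i h,
      fun i => (Fin.castSucc_lt_last (g i)).ne⟩
  left_inv := fun ⟨f, hf, ha⟩ => Subtype.ext (funext fun i => Fin.ext rfl)
  right_inv := fun ⟨g, hg⟩ => Subtype.ext (funext fun i => Fin.ext rfl)

variable {m j k : ℕ}

def cutPre (f : Fin (j+1+k) → Fin (m+1))
    (hav : ∀ i : Fin (j+1+k), (i : ℕ) < j → f i ≠ Fin.last m) : Fin j → Fin m :=
  fun i => ⟨(f ⟨i, by omega⟩ : ℕ),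
    lt_of_le_of_ne (Nat.lt_succ_iff.mp (f ⟨i, by omega⟩).isLt)
      (fun h => hav ⟨i, by omega⟩ i.isLt (Fin.ext h))⟩

def cutSuf (f : Fin (j+1+k) → Fin (m+1)) : Fin k → Fin (m+1) :=
  fun i => f ⟨j+1+i, by omega⟩

def glue (p : Fin j → Fin m) (s : Fin k → Fin (m+1)) : Fin (j+1+k) → Fin (m+1) :=
  fun i => if h1 : (i : ℕ) < j then (p ⟨i, h1⟩).castSucc
    else if h2 : (i : ℕ) = j then Fin.last m
    else s ⟨(i : ℕ) - (j+1), by omega⟩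

lemma glue_lt (p : Fin j → Fin m) (s : Fin k → Fin (m+1)) (i : Fin (j+1+k))
    (h : (i : ℕ) < j) : glue p s i = (p ⟨i, h⟩).castSucc := dif_pos h

lemma glue_eq (p : Fin j → Fin m) (s : Fin k → Fin (m+1)) (i : Fin (j+1+k))
    (h : (i : ℕ) = j) : glue p s i = Fin.last m := by
  rw [glue, dif_neg (by omega), dif_pos h]

lemma glue_gt (p : Fin j → Fin m) (s : Fin k → Fin (m+1)) (i : Fin (j+1+k))
    (h : j < (i : ℕ)) : glue p s i = s ⟨(i : ℕ) - (j+1), by omega⟩ := by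
  rw [glue, dif_neg (by omega), dif_neg (by omega)]

lemma zz_cutPre (f : Fin (j+1+k) → Fin (m+1)) (hav) (hf : IsZigZagSeq f) :
    IsZigZagSeq (cutPre f hav) :=
  fun i h => hf i (by omega)

lemma zz_cutSuf (hj : j % 2 = 1) (f : Fin (j+1+k) → Fin (m+1)) (hf : IsZigZagSeq f) :
    IsZigZagSeq (cutSuf f) := by
  intro i h
  have h2 : j + 1 + i + 1 < j + 1 + k := by omega
  exact ⟨fun hp => (hf (j+1+i) h2).1 (by omega), fun hp => (hf (j+1+i) h2).2 (by omega)⟩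

lemma zz_glue (hj : j % 2 = 1) (p : Fin j → Fin m) (s : Fin k → Fin (m+1))
    (hp : IsZigZagSeq p) (hs : IsZigZagSeq s) : IsZigZagSeq (glue p s) := by
  intro i h
  rcases lt_trichotomy (i+1) j with hlt | heq | hgt
  · have hi : i < j := by omega
    rw [glue_lt p s _ hi, glue_lt p s _ hlt]
    refine ⟨fun hp2 => ?_, fun hp2 => ?_⟩ <;> rw [Fin.castSucc_le_castSucc_iff]
    · exact (hp i (by omega)).1 hp2
    · exact (hp i (by omega)).2 hp2
  · have hi : i < j := by omega
    rw [glue_lt p s _ hi, glue_eq p s _ heq]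
    exact ⟨fun _ => Fin.le_last _, fun hp2 => absurd hp2 (by omega)⟩
  · rcases Nat.eq_or_lt_of_le (by omega : j ≤ i) with heq2 | hgt2
    · rw [glue_eq p s _ heq2.symm, glue_gt p s _ (show j < i+1 by omega)]
      exact ⟨fun hp2 => absurd hp2 (by omega), fun _ => Fin.le_last _⟩
    · rw [glue_gt p s _ hgt2, glue_gt p s _ (show j < i+1 by omega)]
      have key1 : (⟨i+1-(j+1), by omega⟩ : Fin k) = ⟨(i-(j+1))+1, by omega⟩ :=
        Fin.ext (show i+1-(j+1) = i-(j+1)+1 by omega)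
      rw [key1]
      have hs' := hs (i - (j+1)) (by omega)
      exact ⟨fun hp2 => hs'.1 (by omega), fun hp2 => hs'.2 (by omega)⟩

lemma glue_top (p : Fin j → Fin m) (s : Fin k → Fin (m+1)) :
    glue p s ⟨j, by omega⟩ = Fin.last m := glue_eq p s _ rfl

lemma glue_av (p : Fin j → Fin m) (s : Fin k → Fin (m+1)) :
    ∀ i : Fin (j+1+k), (i : ℕ) < j → glue p s i ≠ Fin.last m := by
  intro i hi
  rw [glue_lt p s i hi]
  exact (Fin.castSucc_lt_last _).ne

lemma glue_cut (f : Fin (j+1+k) → Fin (m+1)) (hav)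
    (ht : f ⟨j, by omega⟩ = Fin.last m) :
    glue (cutPre f hav) (cutSuf f) = f := by
  funext i
  rcases lt_trichotomy (i : ℕ) j with hlt | heq | hgt
  · rw [glue_lt _ _ _ hlt]
    exact Fin.ext rfl
  · rw [glue_eq _ _ _ heq, ← ht]
    exact congrArg f (Fin.ext heq.symm)
  · rw [glue_gt _ _ _ hgt, cutSuf]
    exact congrArg f (Fin.ext (by simp; omega))

lemma cutPre_glue (p : Fin j → Fin m) (s : Fin k → Fin (m+1)) (hav) :
    cutPre (glue p s) hav = p := by
  funext i
  apply Fin.ext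
  show ((glue p s ⟨i, by omega⟩ : Fin (m+1)) : ℕ) = _
  rw [glue_lt p s _ (by simpa using i.isLt)]
  rfl

lemma cutSuf_glue (p : Fin j → Fin m) (s : Fin k → Fin (m+1)) :
    cutSuf (glue p s) = s := by
  funext i
  show glue p s ⟨j+1+i, by omega⟩ = s i
  rw [glue_gt p s _ (show j < j+1+(i:ℕ) by omega)]
  exact congrArg s (Fin.ext (by simp))

def glueEquiv (m j k : ℕ) (hj : j % 2 = 1) :
    {f : Fin (j+1+k) → Fin (m+1) //
        IsZigZagSeq f ∧ f ⟨j, by omega⟩ = Fin.last m ∧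
        ∀ i : Fin (j+1+k), (i : ℕ) < j → f i ≠ Fin.last m} ≃
    ({p : Fin j → Fin m // IsZigZagSeq p} × {s : Fin k → Fin (m+1) // IsZigZagSeq s}) where
  toFun x := (⟨cutPre x.1 x.2.2.2, zz_cutPre x.1 x.2.2.2 x.2.1⟩,
    ⟨cutSuf x.1, zz_cutSuf hj x.1 x.2.1⟩)
  invFun y := ⟨glue y.1.1 y.2.1, zz_glue hj y.1.1 y.2.1 y.1.2 y.2.2,
    glue_top y.1.1 y.2.1, glue_av y.1.1 y.2.1⟩
  left_inv x := Subtype.ext (glue_cut x.1 x.2.2.2 x.2.2.1)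
  right_inv y := Prod.ext (Subtype.ext (cutPre_glue y.1.1 y.2.1 (glue_av y.1.1 y.2.1))) (Subtype.ext (cutSuf_glue y.1.1 y.2.1))


/-- The fiber condition: `f` is a zig-zag whose first occurrence of the top value is at `j`. -/
def FibP (n m : ℕ) (j : Fin n) (f : Fin n → Fin (m+1)) : Prop :=
  IsZigZagSeq f ∧ f j = Fin.last m ∧ ∀ i : Fin n, i < j → f i ≠ Fin.last m

def headPut (s : Fin k → Fin (m+1)) : Fin (k+2) → Fin (m+1) :=
  fun i => if h : (i : ℕ) < 2 then Fin.last m else s ⟨(i : ℕ) - 2, by omega⟩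

def headCut (f : Fin (k+2) → Fin (m+1)) : Fin k → Fin (m+1) :=
  fun i => f ⟨(i : ℕ) + 2, by omega⟩

lemma headPut_lt (s : Fin k → Fin (m+1)) (i : Fin (k+2)) (h : (i : ℕ) < 2) :
    headPut s i = Fin.last m := dif_pos h

lemma headPut_ge (s : Fin k → Fin (m+1)) (i : Fin (k+2)) (h : ¬ (i : ℕ) < 2) :
    headPut s i = s ⟨(i : ℕ) - 2, by omega⟩ := dif_neg h

lemma zz_headCut (f : Fin (k+2) → Fin (m+1)) (hf : IsZigZagSeq f) :
    IsZigZagSeq (headCut f) := by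
  intro i h
  have h2 : i + 2 + 1 < k + 2 := by omega
  exact ⟨fun hp => (hf (i+2) h2).1 (by omega), fun hp => (hf (i+2) h2).2 (by omega)⟩

lemma zz_headPut (s : Fin k → Fin (m+1)) (hs : IsZigZagSeq s) :
    IsZigZagSeq (headPut s) := by
  intro i h
  rcases Nat.lt_or_ge (i+1) 2 with hlt | hge
  · rw [headPut_lt s ⟨i, by omega⟩ (show i < 2 by omega),
      headPut_lt s ⟨i+1, h⟩ (show i+1 < 2 by omega)]
    exact ⟨fun _ => le_refl _, fun _ => le_refl _⟩
  · rcases Nat.lt_or_ge i 2 with hlt2 | hge2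
    · rw [headPut_lt s ⟨i, by omega⟩ hlt2, headPut_ge s ⟨i+1, h⟩ (show ¬ i+1 < 2 by omega)]
      exact ⟨fun hp2 => absurd hp2 (by omega), fun _ => Fin.le_last _⟩
    · rw [headPut_ge s ⟨i, by omega⟩ (show ¬ i < 2 by omega),
        headPut_ge s ⟨i+1, h⟩ (show ¬ i+1 < 2 by omega)]
      have key1 : (⟨i+1-2, by omega⟩ : Fin k) = ⟨(i-2)+1, by omega⟩ :=
        Fin.ext (show i+1-2 = i-2+1 by omega)
      rw [key1]
      have hs' := hs (i-2) (by omega)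
      exact ⟨fun hp2 => hs'.1 (by omega), fun hp2 => hs'.2 (by omega)⟩

lemma headPut_headCut (f : Fin (k+2) → Fin (m+1)) (hf : IsZigZagSeq f)
    (ht : f ⟨0, by omega⟩ = Fin.last m) : headPut (headCut f) = f := by
  have h1 : f ⟨1, by omega⟩ = Fin.last m := by
    have := (hf 0 (by omega)).1 rfl
    rw [ht] at this
    exact Fin.last_le_iff.mp this
  funext i
  rcases Nat.lt_or_ge (i : ℕ) 2 with hlt | hge
  · rw [headPut_lt _ _ hlt]
    interval_cases h : (i : ℕ)
    · rw [← ht]; exact (congrArg f (Fin.ext h)).symm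
    · rw [← h1]; exact (congrArg f (Fin.ext h)).symm
  · rw [headPut_ge _ i (show ¬ (i:ℕ) < 2 by omega), headCut]
    exact congrArg f (Fin.ext (by show (i:ℕ) - 2 + 2 = i; omega))

lemma headCut_headPut (s : Fin k → Fin (m+1)) : headCut (headPut s) = s := by
  funext i
  show headPut s ⟨(i:ℕ)+2, _⟩ = s i
  rw [headPut_ge _ ⟨(i:ℕ)+2, by omega⟩ (show ¬ (i:ℕ)+2 < 2 by omega)]
  exact congrArg s (Fin.ext (by show (i:ℕ) + 2 - 2 = i; omega))

def headEquiv (m k : ℕ) :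
    {f : Fin (k+2) → Fin (m+1) // FibP (k+2) m ⟨0, by omega⟩ f} ≃
    {s : Fin k → Fin (m+1) // IsZigZagSeq s} where
  toFun x := ⟨headCut x.1, zz_headCut x.1 x.2.1⟩
  invFun y := ⟨headPut y.1, zz_headPut y.1 y.2, headPut_lt y.1 ⟨0, by omega⟩ (show (0:ℕ) < 2 by omega),
    fun i hi => absurd hi (Nat.not_lt_zero _)⟩
  left_inv x := Subtype.ext (headPut_headCut x.1 x.2.1 x.2.2.1)
  right_inv y := Subtype.ext (headCut_headPut y.1)

lemma unique_fib_one (m : ℕ) :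
    Nat.card {f : Fin 1 → Fin (m+1) // FibP 1 m ⟨0, one_pos⟩ f} = 1 := by
  haveI : Unique {f : Fin 1 → Fin (m+1) // FibP 1 m ⟨0, one_pos⟩ f} := by
    refine ⟨⟨⟨fun _ => Fin.last m, fun i h => absurd h (by omega), rfl,
      fun i hi => absurd hi (Nat.not_lt_zero _)⟩⟩, fun x => ?_⟩
    apply Subtype.ext
    funext i
    rw [Subsingleton.elim i (⟨0, one_pos⟩ : Fin 1)]
    exact x.2.2.1
  exact Nat.card_unique

lemma empty_fib_even (m n : ℕ) (j : Fin n) (h0 : (j : ℕ) ≠ 0) (he : (j : ℕ) % 2 = 0) :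
    IsEmpty {f : Fin n → Fin (m+1) // FibP n m j f} := by
  constructor
  rintro ⟨f, hf, ht, hav⟩
  have h1 : (j : ℕ) - 1 + 1 < n := by have := j.isLt; omega
  have h2 := (hf ((j : ℕ) - 1) h1).2 (by omega)
  have e : (⟨(j : ℕ) - 1 + 1, h1⟩ : Fin n) = j := Fin.ext (by show (j:ℕ)-1+1 = j; omega)
  rw [e, ht] at h2
  exact hav ⟨(j : ℕ) - 1, by omega⟩ (by show (j:ℕ)-1 < j; omega) (Fin.last_le_iff.mp h2)



open scoped Classical in
def caseEquiv (n m : ℕ) : {f : Fin n → Fin (m+1) // IsZigZagSeq f} ≃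
    ({f : Fin n → Fin (m+1) // IsZigZagSeq f ∧ ∀ i, f i ≠ Fin.last m} ⊕
     {f : Fin n → Fin (m+1) // IsZigZagSeq f ∧ ∃ i, f i = Fin.last m}) where
  toFun x := if h : ∀ i, x.1 i ≠ Fin.last m then .inl ⟨x.1, x.2, h⟩
    else .inr ⟨x.1, x.2, by push_neg at h; exact h⟩
  invFun y := y.elim (fun a => ⟨a.1, a.2.1⟩) (fun a => ⟨a.1, a.2.1⟩)
  left_inv x := by
    by_cases h : ∀ i, x.1 i ≠ Fin.last m <;> simp [h]
  right_inv y := by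
    rcases y with a | a
    · simp [a.2.2]
    · have : ¬ ∀ i, a.1 i ≠ Fin.last m := by
        push_neg
        exact a.2.2
      simp [this]

lemma sigma_fib_ext {n m : ℕ} {j1 j2 : Fin n} (h : j1 = j2) (f : Fin n → Fin (m+1))
    (p1 : FibP n m j1 f) (p2 : FibP n m j2 f) :
    (⟨j1, ⟨f, p1⟩⟩ : Σ j, {f : Fin n → Fin (m+1) // FibP n m j f}) = ⟨j2, ⟨f, p2⟩⟩ := by
  subst h; rfl

lemma exP {n m : ℕ} (f : Fin n → Fin (m+1)) (hx : ∃ i, f i = Fin.last m) :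
    ∃ i : ℕ, ∃ h : i < n, f ⟨i, h⟩ = Fin.last m := by
  obtain ⟨i, hi⟩ := hx
  exact ⟨i, i.isLt, hi⟩

open scoped Classical in
noncomputable def firstEquiv (n m : ℕ) :
    {f : Fin n → Fin (m+1) // IsZigZagSeq f ∧ ∃ i, f i = Fin.last m} ≃
    (Σ j : Fin n, {f : Fin n → Fin (m+1) // FibP n m j f}) where
  toFun x := ⟨⟨Nat.find (exP x.1 x.2.2), (Nat.find_spec (exP x.1 x.2.2)).1⟩,
    ⟨x.1, x.2.1, (Nat.find_spec (exP x.1 x.2.2)).2,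
      fun i hi hc => Nat.find_min (exP x.1 x.2.2) hi ⟨i.isLt, hc⟩⟩⟩
  invFun y := ⟨y.2.1, y.2.2.1, ⟨y.1, y.2.2.2.1⟩⟩
  left_inv x := Subtype.ext rfl
  right_inv := by
    rintro ⟨j, f, hf, ht, hmin⟩
    have hj : (⟨Nat.find (exP f ⟨j, ht⟩), (Nat.find_spec (exP f ⟨j, ht⟩)).1⟩ : Fin n) = j := by
      apply Fin.ext
      refine le_antisymm (Nat.find_le ⟨j.isLt, ?_⟩) ((Nat.le_find_iff _ _).2 ?_)
      · show f ⟨(j : ℕ), j.isLt⟩ = Fin.last m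
        rw [Fin.eta]
        exact ht
      · rintro i hi ⟨hin, hc⟩
        exact hmin ⟨i, hin⟩ hi hc
    exact sigma_fib_ext hj f _ _



open scoped Classical in
lemma card_split (n m : ℕ) :
    Nat.card {f : Fin n → Fin (m+1) // IsZigZagSeq f} =
      zzOmega n m + ∑ j : Fin n, Nat.card {f : Fin n → Fin (m+1) // FibP n m j f} := by
  rw [Nat.card_congr (caseEquiv n m), Nat.card_sum, Nat.card_congr (avoidEquiv n m),
    ← omega_eq, Nat.card_congr (firstEquiv n m)]
  congr 1
  rw [Nat.card_eq_fintype_card, Fintype.card_sigma]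
  exact Finset.sum_congr rfl fun j _ => (Nat.card_eq_fintype_card).symm

lemma card_fib_odd (m j k : ℕ) (hj : j % 2 = 1) :
    Nat.card {f : Fin (j+1+k) → Fin (m+1) // FibP (j+1+k) m ⟨j, by omega⟩ f} =
      zzOmega j m * zzOmega k (m+1) := by
  have h := Nat.card_congr (glueEquiv m j k hj)
  rw [Nat.card_prod, ← omega_eq j m, ← omega_eq k (m+1)] at h
  exact h

lemma card_fib_pos (m n j : ℕ) (hjn : j < n) (h0 : j ≠ 0) :
    Nat.card {f : Fin n → Fin (m+1) // FibP n m ⟨j, hjn⟩ f} =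
      if j % 2 = 1 then zzOmega j m * zzOmega (n - 1 - j) (m+1) else 0 := by
  rcases Nat.mod_two_eq_zero_or_one j with he | ho
  · rw [if_neg (by omega)]
    haveI := empty_fib_even m n ⟨j, hjn⟩ h0 (show j % 2 = 0 by omega)
    exact Nat.card_of_isEmpty
  · obtain ⟨k, rfl⟩ : ∃ k, n = j + 1 + k := ⟨n - 1 - j, by omega⟩
    rw [if_pos (by omega)]
    have e : j + 1 + k - 1 - j = k := by omega
    rw [e]
    exact card_fib_odd m j k (by omega)

lemma card_fib_zero (m n' : ℕ) :
    Nat.card {f : Fin (n'+1) → Fin (m+1) // FibP (n'+1) m 0 f} =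
      (if n' + 1 = 1 then 1 else 0) + (if 2 ≤ n' + 1 then zzOmega (n'+1-2) (m+1) else 0) := by
  cases n' with
  | zero =>
    rw [if_pos rfl, if_neg (by omega)]
    exact unique_fib_one m
  | succ k =>
    rw [if_neg (by omega), if_pos (by omega)]
    have : Nat.card {f : Fin (k+2) → Fin (m+1) // FibP (k+2) m ⟨0, by omega⟩ f} =
        zzOmega k (m+1) := by
      rw [Nat.card_congr (headEquiv m k), omega_eq k (m+1)]
    simpa using this

lemma key (m n : ℕ) :
    zzOmega n (m+1) = zzOmega n m + ((if n = 1 then 1 else 0) +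
      (if 2 ≤ n then zzOmega (n-2) (m+1) else 0) +
      ∑ j ∈ Finset.range n, if j % 2 = 1 then zzOmega j m * zzOmega (n-1-j) (m+1) else 0) := by
  rw [omega_eq n (m+1), card_split n m]
  congr 1
  cases n with
  | zero => simp
  | succ n' =>
    rw [Fin.sum_univ_succ, card_fib_zero m n']
    have hterm : ∀ i : Fin n',
        Nat.card {f : Fin (n'+1) → Fin (m+1) // FibP (n'+1) m i.succ f} =
        (fun x : ℕ => if (x+1) % 2 = 1 then
            zzOmega (x+1) m * zzOmega (n'+1-1-(x+1)) (m+1) else 0) (i : ℕ) :=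
      fun i => card_fib_pos m (n'+1) ((i : ℕ)+1) (by omega) (by omega)
    rw [Finset.sum_congr rfl (fun i _ => hterm i)]
    congr 1
    rw [Finset.sum_range_succ'
      (fun j => if j % 2 = 1 then zzOmega j m * zzOmega (n'+1-1-j) (m+1) else 0) n',
      if_neg (by omega : ¬ (0 : ℕ) % 2 = 1), add_zero]
    exact Fin.sum_univ_eq_sum_range
      (fun x : ℕ => if (x+1) % 2 = 1 then zzOmega (x+1) m * zzOmega (n'+1-1-(x+1)) (m+1) else 0) n'


noncomputable def zzO (m : ℕ) : PowerSeries ℚ :=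
  PowerSeries.mk fun n => if n % 2 = 1 then (zzOmega n m : ℚ) else 0

lemma coeff_X_mul' (g : PowerSeries ℚ) (n : ℕ) :
    PowerSeries.coeff n (PowerSeries.X * g) =
      if 1 ≤ n then PowerSeries.coeff (n-1) g else 0 := by
  rw [← pow_one (PowerSeries.X : PowerSeries ℚ), PowerSeries.coeff_X_pow_mul']

lemma zzF_zero : zzF 0 = 1 := by
  ext n
  rw [zzF, coeff_mk, PowerSeries.coeff_one]
  rcases n with _ | n'
  · simp [omega_zero]
  · simp [omega_of_zero (n'+1) (by omega)]

lemma zzO_zero : zzO 0 = 0 := by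
  ext n
  rw [zzO, coeff_mk]
  rcases n with _ | n'
  · simp
  · simp [omega_of_zero (n'+1) (by omega)]

lemma lemA (m : ℕ) : zzF (m+1) = zzF m + X + X^2 * zzF (m+1)
    + X * (zzO m * zzF (m+1)) := by
  ext n
  rw [map_add, map_add, map_add, coeff_X_mul', PowerSeries.coeff_X_pow_mul',
    PowerSeries.coeff_X, zzF, zzF, coeff_mk, coeff_mk]
  rcases n with _ | n'
  · have hk := key m 0
    simp only [Finset.range_zero, Finset.sum_empty] at hk
    norm_num at hk ⊢
    exact_mod_cast hk
  · rw [if_pos (by omega : 1 ≤ n'+1), PowerSeries.coeff_mul,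
      Finset.Nat.sum_antidiagonal_eq_sum_range_succ_mk]
    have hk := key m (n'+1)
    have e : n' + 1 - 1 = n' := rfl
    rw [e] at hk ⊢
    simp only [zzF, zzO, coeff_mk]
    have hsum : ∀ k ∈ Finset.range (n'+1),
        ((if k % 2 = 1 then (zzOmega k m : ℚ) else 0) * (zzOmega (n'-k) (m+1) : ℚ)) =
        ((if k % 2 = 1 then zzOmega k m * zzOmega (n'-k) (m+1) else 0 : ℕ) : ℚ) := by
      intro k _
      split_ifs <;> push_cast <;> ring
    rw [Finset.sum_congr rfl hsum, ← Nat.cast_sum, hk]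
    push_cast
    ring

lemma rescale_zzF (m : ℕ) :
    PowerSeries.rescale (-1) (zzF m) = zzF m - 2 * zzO m := by
  ext n
  rw [two_mul, coeff_rescale, map_sub, map_add, zzF, zzO, coeff_mk, coeff_mk]
  rcases Nat.mod_two_eq_zero_or_one n with he | ho
  · rw [Even.neg_one_pow (Nat.even_iff.mpr he)]
    simp [he]
  · rw [Odd.neg_one_pow (Nat.odd_iff.mpr ho)]
    simp [ho]

lemma rescale_zzO (m : ℕ) :
    PowerSeries.rescale (-1) (zzO m) = - zzO m := by
  ext n
  rw [coeff_rescale, map_neg, zzO, coeff_mk]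
  rcases Nat.mod_two_eq_zero_or_one n with he | ho
  · simp [he]
  · rw [Odd.neg_one_pow (Nat.odd_iff.mpr ho)]
    simp [ho]

lemma rescale_rescale_neg (f : PowerSeries ℚ) :
    PowerSeries.rescale (-1) (PowerSeries.rescale (-1) f) = f := by
  rw [PowerSeries.rescale_rescale]
  norm_num [PowerSeries.rescale_one]

lemma u_ne_zero (m : ℕ) :
    (1 - PowerSeries.X^2 - PowerSeries.X * zzO m : PowerSeries ℚ) ≠ 0 := by
  intro h
  have h0 := congrArg (PowerSeries.constantCoeff (R := ℚ)) h
  simp [PowerSeries.constantCoeff_X] at h0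

lemma lemD (m : ℕ) : zzO (m+1) = X + zzO m + X^2 * zzO (m+1)
    + X * (zzO (m+1) * zzO m) := by
  have hA := lemA m
  have hRA := congrArg (PowerSeries.rescale (-1)) hA
  simp only [map_add, map_mul, map_pow, PowerSeries.rescale_X, rescale_zzF, rescale_zzO, map_neg, map_one] at hRA
  have h20 : (2 : PowerSeries ℚ) ≠ 0 := by
    intro h
    have h0 := congrArg (PowerSeries.constantCoeff (R := ℚ)) h
    rw [map_zero, ← map_ofNat (PowerSeries.C (R := ℚ)) 2, PowerSeries.constantCoeff_C] at h0
    norm_num at h0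
  refine mul_left_cancel₀ h20 ?_
  linear_combination hA - hRA

/-- `hFu` : `F_{m+1}·u = X + F_m`. -/
lemma hFu (m : ℕ) : zzF (m+1) * (1 - X^2 - X * zzO m) = X + zzF m := by
  linear_combination lemA m

lemma hOu (m : ℕ) : zzO (m+1) * (1 - X^2 - X * zzO m) = X + zzO m := by
  linear_combination lemD m

/-- `C_m` : `F_m(y)·F_m(-y) = 1 + y·O_m`. -/
lemma lemC : ∀ m : ℕ, zzF m * PowerSeries.rescale (-1) (zzF m) = 1 + X * zzO m := by
  intro m
  induction m with
  | zero => rw [zzF_zero, zzO_zero, map_one]; ring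
  | succ m ih =>
    have hR := rescale_zzF m
    have hR2 := rescale_zzF (m+1)
    have hGu : (X + zzF m) * (zzF m - 2 * zzO m - X) = 1 - X^2 - X * zzO m := by
      linear_combination ih - zzF m * hR
    have hstep : (zzF (m+1) * PowerSeries.rescale (-1) (zzF (m+1))) *
        ((1 - X^2 - X * zzO m) * (1 - X^2 - X * zzO m)) =
        (1 + X * zzO (m+1)) * ((1 - X^2 - X * zzO m) * (1 - X^2 - X * zzO m)) := by
      linear_combination (zzF (m+1) * (1 - X^2 - X * zzO m) * (1 - X^2 - X * zzO m)) * hR2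
        + hGu
        + ((X + zzF m) + (zzF m - X - 2 * zzO m)
            + (zzF (m+1) * (1 - X^2 - X * zzO m) - X - zzF m)) * hFu m
        - (2 * (X + zzF m) + 2 * (zzF (m+1) * (1 - X^2 - X * zzO m) - X - zzF m)
            + X * (1 - X^2 - X * zzO m)) * hOu m
    exact mul_right_cancel₀ (mul_ne_zero (u_ne_zero m) (u_ne_zero m)) hstep

/-- `Q_{m+1}` : `F_m(-y)·F_{m+1}(y) = 1 + y·F_{m+1}(y)`. -/
lemma lemQ (m : ℕ) :
    PowerSeries.rescale (-1) (zzF m) * zzF (m+1) = 1 + X * zzF (m+1) := by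
  have hR := rescale_zzF m
  have hGu : (X + zzF m) * (zzF m - 2 * zzO m - X) = 1 - X^2 - X * zzO m := by
    linear_combination lemC m - zzF m * hR
  have hstep : (PowerSeries.rescale (-1) (zzF m) * zzF (m+1)) * (1 - X^2 - X * zzO m) =
      (1 + X * zzF (m+1)) * (1 - X^2 - X * zzO m) := by
    linear_combination (PowerSeries.rescale (-1) (zzF m) - X) * hFu m + hGu
      + (X + zzF m) * hR
  exact mul_right_cancel₀ (u_ne_zero m) hstep

end ZZaux

/-- for `m ≥ 2`, `(2 - y² - y·F_{m-1}(y)) · F_m(y) = y + 2·F_{m-1}(y)`. -/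
theorem zzF_rec_pos (m : ℕ) (hm : 2 ≤ m) :
    (2 - PowerSeries.X ^ 2 - PowerSeries.X * zzF (m - 1)) * zzF m =
      PowerSeries.X + 2 * zzF (m - 1) := by
  obtain ⟨k, rfl⟩ : ∃ k, m = k + 2 := ⟨m - 2, by omega⟩
  show (2 - PowerSeries.X ^ 2 - PowerSeries.X * zzF (k+1)) * zzF (k+2) =
      PowerSeries.X + 2 * zzF (k+1)
  have hFu := ZZaux.hFu (k+1)
  have hQ := ZZaux.lemQ (k+1)
  have hR := ZZaux.rescale_zzF (k+1)
  linear_combination 2 * hFu - PowerSeries.X * hQ + PowerSeries.X * zzF (k+2) * hR
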